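/- The incidence structure ([V], 𝒜' ∪ ℬ') is a 2-(v, k, λ) design with v = (q^{2e+1} − 1)/(q − 1), k = (q^{e+1} − 1)/(q − 1), and λ = (q^{2e−1} − 1)(q^{2e−2} − 1)⋯(q^{e+1} − 1)/((q^{e−1} − 1)(q^{e−2} − 1)⋯(q − 1)); that is, every block has exactly k points and every pair of distinct points of [V] is contained in exactly λ blocks. -/

import Mathlib

/-- The set of projective points (1-dimensional subspaces) contained in a subset `S` of `V`. -/
def projPts (K : Type*) {V : Type*} [Field K] [AddCommGroup V] [Module K V]
    (S : Set V) : Set (Submodule K V) :=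
  {P | Module.finrank K P = 1 ∧ (P : Set V) ⊆ S}

/-- `𝒜`: the (e+1)-dimensional subspaces of `V` not contained in `H`. -/
def setA {K V : Type*} [Field K] [AddCommGroup V] [Module K V]
    (e : ℕ) (H : Submodule K V) : Set (Submodule K V) :=
  {W | Module.finrank K W = e + 1 ∧ ¬ W ≤ H}

/-- `ℬ`: the (e-1)-dimensional subspaces of `H`. -/
def setB {K V : Type*} [Field K] [AddCommGroup V] [Module K V]
    (e : ℕ) (H : Submodule K V) : Set (Submodule K V) :=
  {W | Module.finrank K W = e - 1 ∧ W ≤ H}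

/-- The block `[σ(W ∩ H) ∪ (W \ H)]` associated to `W ∈ 𝒜`. -/
def blockA {K V : Type*} [Field K] [AddCommGroup V] [Module K V]
    (σ : Submodule K V → Submodule K V) (H W : Submodule K V) : Set (Submodule K V) :=
  projPts K ((σ (W ⊓ H) : Set V) ∪ ((W : Set V) \ (H : Set V)))

/-- The block `[σ(W)]` associated to `W ∈ ℬ`. -/
def blockB {K V : Type*} [Field K] [AddCommGroup V] [Module K V]
    (σ : Submodule K V → Submodule K V) (W : Submodule K V) : Set (Submodule K V) :=
  projPts K (σ W : Set V)

/-- The block set `𝒜' ∪ ℬ'` of the Jungnickel–Tonchev design. -/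
def blocksJT {K V : Type*} [Field K] [AddCommGroup V] [Module K V]
    (e : ℕ) (σ : Submodule K V → Submodule K V) (H : Submodule K V) :
    Set (Set (Submodule K V)) :=
  (blockA σ H '' setA e H) ∪
    {B | ∃ W : Submodule K V, Module.finrank K W = e + 1 ∧ W ≤ H ∧ B = projPts K (W : Set V)}


open Module Set


open Module Set

theorem prod_pow_sub_pow (q n k : ℕ) (hq : 1 ≤ q) (hk : k ≤ n) :
    ∏ i ∈ Finset.range k, (q ^ n - q ^ i)
      = q ^ (∑ i ∈ Finset.range k, i) * ∏ i ∈ Finset.Icc (n - k + 1) n, (q ^ i - 1) := by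
  induction k with
  | zero =>
    simp [Finset.Icc_eq_empty_of_lt (Nat.lt_succ_self n)]
  | succ k ih =>
    have hkn : k ≤ n := Nat.le_of_succ_le hk
    rw [Finset.prod_range_succ, ih hkn, Finset.sum_range_succ]
    have h1 : q ^ n - q ^ k = q ^ k * (q ^ (n - k) - 1) := by
      rw [Nat.mul_sub, mul_one, ← pow_add]
      congr 2
      omega
    have h2 : ∏ i ∈ Finset.Icc (n - (k + 1) + 1) n, (q ^ i - 1)
        = (q ^ (n - k) - 1) * ∏ i ∈ Finset.Icc (n - k + 1) n, (q ^ i - 1) := by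
      have hnk : n - (k + 1) + 1 = n - k := by omega
      rw [hnk, ← Finset.Ico_add_one_right_eq_Icc,
        Finset.prod_eq_prod_Ico_succ_bot (by omega : n - k < n + 1),
        Finset.Ico_add_one_right_eq_Icc]
    rw [h2, pow_add, h1]
    ring

section Engine
variable {K M : Type*} [Field K] [Fintype K] [AddCommGroup M] [Module K M] [FiniteDimensional K M]

local notation "q" => Fintype.card K

theorem count_subspaces_raw (k : ℕ) (hk : k ≤ finrank K M) :
    {W : Submodule K M | finrank K ↥W = k}.ncard * ∏ i ∈ Finset.range k, (q ^ k - q ^ i)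
      = ∏ i ∈ Finset.range k, (q ^ finrank K M - q ^ i) := by
  classical
  haveI : Finite M := Module.finite_of_finite K
  haveI := Fintype.ofFinite M
  haveI := Fintype.ofFinite (Submodule K M)
  -- fibers
  have hfib : ∀ W : Submodule K M, finrank K ↥W = k →
      Nat.card {s : Fin k → M // LinearIndependent K s ∧ Submodule.span K (Set.range s) = W}
        = ∏ i ∈ Finset.range k, (q ^ k - q ^ i) := by
    intro W hW
    have e1 : {s : Fin k → M // LinearIndependent K s ∧ Submodule.span K (Set.range s) = W}
        ≃ {t : Fin k → W // LinearIndependent K t} := by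
      refine ⟨fun s => ⟨fun i => ⟨s.1 i, by
          have h := Submodule.subset_span (R := K) (s := Set.range s.1) (Set.mem_range_self i)
          rwa [s.2.2] at h⟩, ?_⟩,
        fun t => ⟨W.subtype ∘ t.1, ?_, ?_⟩, ?_, ?_⟩
      · exact (LinearIndependent.of_comp W.subtype (by exact s.2.1))
      · exact t.2.map' W.subtype (Submodule.ker_subtype W)
      · have h1 : Submodule.span K (Set.range (W.subtype ∘ t.1)) =
            Submodule.map W.subtype (Submodule.span K (Set.range t.1)) := by
          rw [Set.range_comp, Submodule.map_span]
        rw [h1]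
        apply Submodule.eq_of_le_of_finrank_eq
        · exact Submodule.map_subtype_le _ _
        · rw [Submodule.finrank_map_subtype_eq, finrank_span_eq_card t.2, Fintype.card_fin, hW]
      · intro s; ext i; rfl
      · intro t; ext i; rfl
    rw [Nat.card_congr e1, card_linearIndependent (by rw [hW]) , hW]
    · exact Fin.prod_univ_eq_prod_range (fun i => q ^ k - q ^ i) k
  -- total
  have htot : Nat.card {s : Fin k → M // LinearIndependent K s}
      = ∏ i ∈ Finset.range k, (q ^ finrank K M - q ^ i) := by
    rw [card_linearIndependent hk]
    exact Fin.prod_univ_eq_prod_range (fun i => q ^ finrank K M - q ^ i) k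
  set t : Finset (Submodule K M) := Finset.univ.filter (fun W => finrank K ↥W = k) with ht
  set s : Finset (Fin k → M) := Finset.univ.filter (fun a => LinearIndependent K a) with hs
  have hmapsto : ∀ a ∈ s, Submodule.span K (Set.range a) ∈ t := by
    intro a ha
    simp only [hs, ht, Finset.mem_filter, Finset.mem_univ, true_and] at ha ⊢
    rw [finrank_span_eq_card ha, Fintype.card_fin]
  have hsum := Finset.card_eq_sum_card_fiberwise hmapsto
  have hcards : Nat.card {s : Fin k → M // LinearIndependent K s} = s.card := by
    rw [Nat.card_eq_fintype_card, Fintype.card_subtype, hs]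
  have hfibeq : ∀ W ∈ t, (s.filter (fun a => Submodule.span K (Set.range a) = W)).card
      = ∏ i ∈ Finset.range k, (q ^ k - q ^ i) := by
    intro W hW
    simp only [ht, Finset.mem_filter, Finset.mem_univ, true_and] at hW
    rw [← hfib W hW, Nat.card_eq_fintype_card, Fintype.card_subtype, hs,
      Finset.filter_filter]
  have hcardt : {W : Submodule K M | finrank K ↥W = k}.ncard = t.card := by
    rw [Set.ncard_eq_toFinset_card', Set.toFinset_setOf]
  rw [hcardt, ← htot, hcards, hsum, Finset.sum_congr rfl hfibeq, Finset.sum_const, smul_eq_mul]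

theorem count_subspaces (k : ℕ) (hk : k ≤ finrank K M) :
    {W : Submodule K M | finrank K ↥W = k}.ncard * ∏ i ∈ Finset.Icc 1 k, (q ^ i - 1)
      = ∏ i ∈ Finset.Icc (finrank K M - k + 1) (finrank K M), (q ^ i - 1) := by
  have hq : 1 ≤ q := Fintype.card_pos
  have hraw := count_subspaces_raw (M := M) k hk
  rw [prod_pow_sub_pow q (finrank K M) k hq hk, prod_pow_sub_pow q k k hq le_rfl] at hraw
  simp only [Nat.sub_self, Nat.zero_add] at hraw
  apply Nat.eq_of_mul_eq_mul_left (show 0 < q ^ (∑ i ∈ Finset.range k, i) from pow_pos hq _)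
  rw [← hraw]
  ring

theorem finrank_comap_mkQ (p : Submodule K M) (U : Submodule K (M ⧸ p)) :
    finrank K ↥(U.comap p.mkQ) = finrank K ↥U + finrank K ↥p := by
  have h := LinearMap.finrank_range_add_finrank_ker ((p.mkQ).domRestrict (U.comap p.mkQ))
  rw [LinearMap.range_domRestrict, Submodule.map_comap_eq_of_surjective p.mkQ_surjective,
    LinearMap.ker_domRestrict, Submodule.ker_mkQ] at h
  have hple : p ≤ U.comap p.mkQ := by
    intro x hx
    simp only [Submodule.mem_comap, Submodule.mkQ_apply]
    rw [(Submodule.Quotient.mk_eq_zero p).2 hx]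
    exact U.zero_mem
  rw [← h, LinearEquiv.finrank_eq (Submodule.comapSubtypeEquivOfLe hple)]

theorem count_interval (L X : Submodule K M) (hLX : L ≤ X) (k : ℕ)
    (hLk : finrank K ↥L ≤ k) (hkX : k ≤ finrank K ↥X) :
    {W : Submodule K M | finrank K ↥W = k ∧ L ≤ W ∧ W ≤ X}.ncard
      * ∏ i ∈ Finset.Icc 1 (k - finrank K ↥L), (q ^ i - 1)
      = ∏ i ∈ Finset.Icc (finrank K ↥X - k + 1) (finrank K ↥X - finrank K ↥L),
          (q ^ i - 1) := by
  classical
  set l := finrank K ↥L with hl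
  set x := finrank K ↥X with hx
  set L' : Submodule K ↥X := L.comap X.subtype with hL'
  have hfL' : finrank K ↥L' = l := LinearEquiv.finrank_eq (Submodule.comapSubtypeEquivOfLe hLX)
  have hfQ : finrank K (↥X ⧸ L') = x - l := by
    have := Submodule.finrank_quotient_add_finrank L'
    omega
  set g : Submodule K (↥X ⧸ L') → Submodule K M :=
    fun U => (U.comap L'.mkQ).map X.subtype with hg
  have hginj : Function.Injective g := by
    intro U₁ U₂ h
    exact (Submodule.comap_injective_of_surjective L'.mkQ_surjective)
      (Submodule.map_injective_of_injective X.injective_subtype h)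
  have himg : {W : Submodule K M | finrank K ↥W = k ∧ L ≤ W ∧ W ≤ X}
      = g '' {U : Submodule K (↥X ⧸ L') | finrank K ↥U = k - l} := by
    ext W
    constructor
    · rintro ⟨hWk, hLW, hWX⟩
      set W' : Submodule K ↥X := W.comap X.subtype with hW'
      have hmapW' : W'.map X.subtype = W := by
        rw [hW', Submodule.map_comap_subtype, inf_eq_right.2 hWX]
      have hfW' : finrank K ↥W' = k := by
        rw [← hWk, ← hmapW', Submodule.finrank_map_subtype_eq]
      have hL'W' : L' ≤ W' := Submodule.comap_mono hLW
      refine ⟨W'.map L'.mkQ, ?_, ?_⟩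
      · have hcm : (W'.map L'.mkQ).comap L'.mkQ = W' := by
          rw [Submodule.comap_map_mkQ, sup_eq_right.2 hL'W']
        have := finrank_comap_mkQ L' (W'.map L'.mkQ)
        rw [hcm, hfL'] at this
        simp only [Set.mem_setOf_eq]
        omega
      · rw [hg]
        simp only
        rw [Submodule.comap_map_mkQ, sup_eq_right.2 hL'W', hmapW']
    · rintro ⟨U, hU, rfl⟩
      simp only [Set.mem_setOf_eq] at hU
      have hL'U : L' ≤ U.comap L'.mkQ := by
        have : L' = (⊥ : Submodule K (↥X ⧸ L')).comap L'.mkQ := by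
          rw [Submodule.comap_bot, Submodule.ker_mkQ]
        exact le_trans (le_of_eq this) (Submodule.comap_mono bot_le)
      refine ⟨?_, ?_, Submodule.map_subtype_le _ _⟩
      · rw [hg]
        simp only
        rw [Submodule.finrank_map_subtype_eq, finrank_comap_mkQ, hU, hfL']
        omega
      · have : L = L'.map X.subtype := by
          rw [hL', Submodule.map_comap_subtype, inf_eq_right.2 hLX]
        rw [this, hg]
        exact Submodule.map_mono hL'U
  rw [himg, Set.ncard_image_of_injective _ hginj]
  have := count_subspaces (K := K) (M := ↥X ⧸ L') (k - l) (by rw [hfQ]; omega)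
  rw [hfQ] at this
  rw [this]
  congr 2
  omega


end Engine

section Struct
variable {K V : Type*} [Field K] [AddCommGroup V] [Module K V] [FiniteDimensional K V]

theorem point_eq_span {P : Submodule K V} (hP : finrank K ↥P = 1) {x : V}
    (hx : x ∈ P) (hx0 : x ≠ 0) : P = Submodule.span K {x} := by
  symm
  apply Submodule.eq_of_le_of_finrank_eq ((Submodule.span_singleton_le_iff_mem x P).2 hx)
  rw [finrank_span_singleton hx0, hP]

theorem point_exists {P : Submodule K V} (hP : finrank K ↥P = 1) : ∃ x ∈ P, x ≠ 0 := by
  have hPb : P ≠ ⊥ := by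
    intro h
    rw [h, finrank_bot] at hP
    omega
  exact Submodule.exists_mem_ne_zero_of_ne_bot hPb

theorem mem_projPts_iff {S P : Submodule K V} :
    P ∈ projPts K (S : Set V) ↔ finrank K ↥P = 1 ∧ P ≤ S := by
  simp only [projPts, Set.mem_setOf_eq, SetLike.coe_subset_coe]

theorem projPts_injective {U₁ U₂ : Submodule K V}
    (h : projPts K (U₁ : Set V) = projPts K (U₂ : Set V)) : U₁ = U₂ := by
  ext x
  constructor <;> intro hx
  · rcases eq_or_ne x 0 with rfl | hx0
    · exact U₂.zero_mem
    · have : Submodule.span K {x} ∈ projPts K (U₁ : Set V) := by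
        rw [mem_projPts_iff]
        exact ⟨finrank_span_singleton hx0, (Submodule.span_singleton_le_iff_mem x U₁).2 hx⟩
      rw [h, mem_projPts_iff] at this
      exact this.2 (Submodule.mem_span_singleton_self x)
  · rcases eq_or_ne x 0 with rfl | hx0
    · exact U₁.zero_mem
    · have : Submodule.span K {x} ∈ projPts K (U₂ : Set V) := by
        rw [mem_projPts_iff]
        exact ⟨finrank_span_singleton hx0, (Submodule.span_singleton_le_iff_mem x U₂).2 hx⟩
      rw [← h, mem_projPts_iff] at this
      exact this.2 (Submodule.mem_span_singleton_self x)

theorem mem_blockA_iff {σ : Submodule K V → Submodule K V} {H W P : Submodule K V} :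
    P ∈ blockA σ H W ↔
      finrank K ↥P = 1 ∧ (P ≤ σ (W ⊓ H) ∨ (P ≤ W ∧ ¬ P ≤ H)) := by
  constructor
  · rintro ⟨hP1, hPsub⟩
    refine ⟨hP1, ?_⟩
    obtain ⟨x, hxP, hx0⟩ := point_exists hP1
    rcases hPsub hxP with hxσ | ⟨hxW, hxH⟩
    · left
      rw [point_eq_span hP1 hxP hx0]
      exact (Submodule.span_singleton_le_iff_mem x _).2 hxσ
    · right
      constructor
      · rw [point_eq_span hP1 hxP hx0]
        exact (Submodule.span_singleton_le_iff_mem x _).2 hxW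
      · intro hle
        exact hxH (hle hxP)
  · rintro ⟨hP1, hσ | ⟨hPW, hPH⟩⟩
    · exact ⟨hP1, fun x hx => Or.inl (hσ hx)⟩
    · refine ⟨hP1, fun x hx => ?_⟩
      rcases eq_or_ne x 0 with rfl | hx0
      · exact Or.inl (σ (W ⊓ H)).zero_mem
      · refine Or.inr ⟨hPW hx, fun hxH => ?_⟩
        apply hPH
        rw [point_eq_span hP1 hx hx0]
        exact (Submodule.span_singleton_le_iff_mem x _).2 hxH

/-- A subspace not contained in `H` is recovered from its points off `H`. -/
theorem eq_of_offH_points {H W₁ W₂ : Submodule K V} (h₁ : ¬ W₁ ≤ H) (h₂ : ¬ W₂ ≤ H)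
    (h : ∀ P : Submodule K V, finrank K ↥P = 1 →
      ((P ≤ W₁ ∧ ¬ P ≤ H) ↔ (P ≤ W₂ ∧ ¬ P ≤ H))) : W₁ = W₂ := by
  have key : ∀ (A B : Submodule K V), ¬ A ≤ H →
      (∀ P : Submodule K V, finrank K ↥P = 1 → (P ≤ A ∧ ¬ P ≤ H) → (P ≤ B ∧ ¬ P ≤ H)) →
      A ≤ B := by
    intro A B hA hAB
    obtain ⟨w, hwA, hwH⟩ := SetLike.not_le_iff_exists.1 hA
    have hw0 : w ≠ 0 := fun h0 => hwH (h0 ▸ H.zero_mem)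
    have hmem : ∀ x ∈ A, x ∉ H → x ∈ B := by
      intro x hxA hxH
      have hx0 : x ≠ 0 := fun h0 => hxH (h0 ▸ H.zero_mem)
      have hsp : Submodule.span K {x} ≤ A ∧ ¬ Submodule.span K {x} ≤ H := by
        refine ⟨(Submodule.span_singleton_le_iff_mem x _).2 hxA, fun hle => hxH ?_⟩
        exact hle (Submodule.mem_span_singleton_self x)
      have := hAB _ (finrank_span_singleton hx0) hsp
      exact this.1 (Submodule.mem_span_singleton_self x)
    intro x hxA
    by_cases hxH : x ∈ H
    · have h1 : x + w ∈ A := A.add_mem hxA hwA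
      have h2 : x + w ∉ H := fun hc => hwH (by simpa using H.sub_mem hc hxH)
      have h3 : x + w ∈ B := hmem _ h1 h2
      have h4 : w ∈ B := hmem _ hwA hwH
      simpa using B.sub_mem h3 h4
    · exact hmem x hxA hxH
  exact le_antisymm
    (key W₁ W₂ h₁ (fun P hP hPW => (h P hP).1 hPW))
    (key W₂ W₁ h₂ (fun P hP hPW => (h P hP).2 hPW))

theorem blockA_injOn {σ : Submodule K V → Submodule K V} {H : Submodule K V}
    (hσle : ∀ W ≤ H, σ W ≤ H) {e : ℕ} :
    Set.InjOn (blockA σ H) (setA e H) := by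
  rintro W₁ ⟨-, h₁⟩ W₂ ⟨-, h₂⟩ h
  refine eq_of_offH_points h₁ h₂ (fun P hP => ?_)
  have key : ∀ W : Submodule K V, ¬ W ≤ H →
      ((P ≤ W ∧ ¬ P ≤ H) ↔ (P ∈ blockA σ H W ∧ ¬ P ≤ H)) := by
    intro W hW
    rw [mem_blockA_iff]
    constructor
    · rintro ⟨hPW, hPH⟩
      exact ⟨⟨hP, Or.inr ⟨hPW, hPH⟩⟩, hPH⟩
    · rintro ⟨⟨-, hor⟩, hPH⟩
      rcases hor with hσP | hPW
      · exact absurd (le_trans hσP (hσle _ inf_le_right)) hPH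
      · exact hPW
  rw [key W₁ h₁, key W₂ h₂, h]

theorem blockA_ne_projPts {σ : Submodule K V → Submodule K V} {H W U : Submodule K V}
    (hW : ¬ W ≤ H) (hU : U ≤ H) : blockA σ H W ≠ projPts K (U : Set V) := by
  obtain ⟨w, hwW, hwH⟩ := SetLike.not_le_iff_exists.1 hW
  have hw0 : w ≠ 0 := fun h0 => hwH (h0 ▸ H.zero_mem)
  intro h
  have hmem : Submodule.span K {w} ∈ blockA σ H W := by
    rw [mem_blockA_iff]
    refine ⟨finrank_span_singleton hw0, Or.inr ⟨(Submodule.span_singleton_le_iff_mem w _).2 hwW,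
      fun hle => hwH (hle (Submodule.mem_span_singleton_self w))⟩⟩
  rw [h, mem_projPts_iff] at hmem
  exact hwH (hU (hmem.2 (Submodule.mem_span_singleton_self w)))

end Struct


theorem ncard_eq_of_fibers {α : Type*} [Finite α] (f : α → α) (S T : Set α) (c : ℕ)
    (hmem : ∀ a ∈ S, f a ∈ T) (hfib : ∀ b ∈ T, {a ∈ S | f a = b}.ncard = c) :
    S.ncard = T.ncard * c := by
  classical
  haveI := Fintype.ofFinite α
  have h := Finset.card_eq_sum_card_fiberwise (f := f) (s := S.toFinset) (t := T.toFinset)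
    (fun a ha => by simpa [Set.mem_toFinset] using hmem a (Set.mem_toFinset.1 ha))
  rw [Set.ncard_eq_toFinset_card', Set.ncard_eq_toFinset_card', h]
  rw [Finset.sum_congr rfl (fun b hb => ?_), Finset.sum_const, smul_eq_mul]
  rw [← hfib b (Set.mem_toFinset.1 hb), Set.ncard_eq_toFinset_card']
  congr 1
  ext a
  simp [Set.mem_toFinset]

theorem prod_Icc_succ_bot' {a b : ℕ} (h : a ≤ b) (f : ℕ → ℕ) :
    ∏ i ∈ Finset.Icc a b, f i = f a * ∏ i ∈ Finset.Icc (a + 1) b, f i := by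
  rw [← Finset.Ico_add_one_right_eq_Icc, Finset.prod_eq_prod_Ico_succ_bot (by omega : a < b + 1),
    Finset.Ico_add_one_right_eq_Icc]

theorem prod_Icc_pos {q a b : ℕ} (hq : 2 ≤ q) (ha : 1 ≤ a) :
    0 < ∏ i ∈ Finset.Icc a b, (q ^ i - 1) := by
  apply Finset.prod_pos
  intro i hi
  have hi1 : 1 ≤ i := le_trans ha (Finset.mem_Icc.1 hi).1
  have : 2 ≤ q ^ i := le_trans hq (Nat.le_self_pow (by omega) q)
  omega

theorem nat_div_helper {a b c : ℕ} (hb : 0 < b) (h : a * b = c) : a = c / b := by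
  rw [← h, Nat.mul_div_cancel a hb]

theorem mixed_arith {q e Nd : ℕ} (hq : 2 ≤ q) (he : 2 ≤ e)
    (h : Nd * ∏ i ∈ Finset.Icc 1 e, (q ^ i - 1) = ∏ i ∈ Finset.Icc e (2 * e - 1), (q ^ i - 1)) :
    Nd * ∏ i ∈ Finset.Icc 1 (e - 1), (q ^ i - 1)
      = ∏ i ∈ Finset.Icc (e + 1) (2 * e - 1), (q ^ i - 1) := by
  have he1 : 0 < q ^ e - 1 := by
    have : 2 ≤ q ^ e := le_trans hq (Nat.le_self_pow (by omega) q)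
    omega
  apply Nat.eq_of_mul_eq_mul_right he1
  have h1 : ∏ i ∈ Finset.Icc 1 e, (q ^ i - 1)
      = (∏ i ∈ Finset.Icc 1 (e - 1), (q ^ i - 1)) * (q ^ e - 1) := by
    have h := Finset.prod_Icc_succ_top (f := fun i => q ^ i - 1) (a := 1) (b := e - 1) (by omega)
    rw [show e - 1 + 1 = e by omega] at h
    rw [h]
  have h2 : ∏ i ∈ Finset.Icc e (2 * e - 1), (q ^ i - 1)
      = (q ^ e - 1) * ∏ i ∈ Finset.Icc (e + 1) (2 * e - 1), (q ^ i - 1) := by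
    rw [prod_Icc_succ_bot' (by omega) _]
  rw [mul_assoc, ← h1, h, h2]
  ring

theorem caseH_arith {q e Na Nb : ℕ} (hq : 2 ≤ q) (he : 2 ≤ e)
    (ha : Na * ∏ i ∈ Finset.Icc 1 (e - 1), (q ^ i - 1)
        = ∏ i ∈ Finset.Icc e (2 * e - 2), (q ^ i - 1))
    (hb : Nb * ∏ i ∈ Finset.Icc 1 e, (q ^ i - 1)
        = ∏ i ∈ Finset.Icc (e - 1) (2 * e - 2), (q ^ i - 1)) :
    (Na + Nb * q ^ e) * ∏ i ∈ Finset.Icc 1 (e - 1), (q ^ i - 1)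
      = ∏ i ∈ Finset.Icc (e + 1) (2 * e - 1), (q ^ i - 1) := by
  have he1 : 0 < q ^ e - 1 := by
    have : 2 ≤ q ^ e := le_trans hq (Nat.le_self_pow (by omega) q)
    omega
  apply Nat.eq_of_mul_eq_mul_right he1
  set A := ∏ i ∈ Finset.Icc e (2 * e - 2), (q ^ i - 1) with hA
  have h1 : ∏ i ∈ Finset.Icc 1 e, (q ^ i - 1)
      = (∏ i ∈ Finset.Icc 1 (e - 1), (q ^ i - 1)) * (q ^ e - 1) := by
    have h := Finset.prod_Icc_succ_top (f := fun i => q ^ i - 1) (a := 1) (b := e - 1) (by omega)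
    rw [show e - 1 + 1 = e by omega] at h
    rw [h]
  have h2 : ∏ i ∈ Finset.Icc (e - 1) (2 * e - 2), (q ^ i - 1)
      = (q ^ (e - 1) - 1) * A := by
    have h := prod_Icc_succ_bot' (show e - 1 ≤ 2 * e - 2 by omega) (fun i => q ^ i - 1)
    rw [show e - 1 + 1 = e by omega] at h
    exact h
  have h3 : (∏ i ∈ Finset.Icc (e + 1) (2 * e - 1), (q ^ i - 1)) * (q ^ e - 1)
      = A * (q ^ (2 * e - 1) - 1) := by
    have l1 : ∏ i ∈ Finset.Icc e (2 * e - 1), (q ^ i - 1)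
        = (q ^ e - 1) * ∏ i ∈ Finset.Icc (e + 1) (2 * e - 1), (q ^ i - 1) :=
      prod_Icc_succ_bot' (by omega) _
    have l2 : ∏ i ∈ Finset.Icc e (2 * e - 1), (q ^ i - 1)
        = A * (q ^ (2 * e - 1) - 1) := by
      have h := Finset.prod_Icc_succ_top (f := fun i => q ^ i - 1) (a := e) (b := 2 * e - 2)
        (by omega)
      rw [show 2 * e - 2 + 1 = 2 * e - 1 by omega] at h
      rw [h]
    rw [← l2, l1]
    ring
  have key : (q ^ e - 1) + q ^ e * (q ^ (e - 1) - 1) = q ^ (2 * e - 1) - 1 := by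
    have h4 : q ^ e * (q ^ (e - 1) - 1) = q ^ (2 * e - 1) - q ^ e := by
      rw [Nat.mul_sub, mul_one, ← pow_add]
      congr 2
      omega
    have h5 : q ^ e ≤ q ^ (2 * e - 1) := Nat.pow_le_pow_right (by omega) (by omega)
    have h6 : 1 ≤ q ^ e := Nat.one_le_two_pow.trans (Nat.pow_le_pow_left hq e)
    omega
  calc (Na + Nb * q ^ e) * (∏ i ∈ Finset.Icc 1 (e - 1), (q ^ i - 1)) * (q ^ e - 1)
      = (Na * ∏ i ∈ Finset.Icc 1 (e - 1), (q ^ i - 1)) * (q ^ e - 1)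
        + q ^ e * (Nb * ((∏ i ∈ Finset.Icc 1 (e - 1), (q ^ i - 1)) * (q ^ e - 1))) := by ring
    _ = A * (q ^ e - 1) + q ^ e * ((q ^ (e - 1) - 1) * A) := by rw [ha, ← h1, hb, h2]
    _ = A * ((q ^ e - 1) + q ^ e * (q ^ (e - 1) - 1)) := by ring
    _ = A * (q ^ (2 * e - 1) - 1) := by rw [key]
    _ = (∏ i ∈ Finset.Icc (e + 1) (2 * e - 1), (q ^ i - 1)) * (q ^ e - 1) := h3.symm


/-- The incidence structure `([V], 𝒜' ∪ ℬ')` is a 2-(v, k, λ) design with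
`v = (q^{2e+1} - 1)/(q - 1)`, `k = (q^{e+1} - 1)/(q - 1)` and
`λ = (q^{2e-1} - 1) ⋯ (q^{e+1} - 1) / ((q^{e-1} - 1) ⋯ (q - 1))`: the point set has `v`
elements, every block has exactly `k` points, and every pair of distinct points is contained
in exactly `λ` blocks. -/
theorem stmt14 (q e : ℕ) (hq : ∃ p n : ℕ, p.Prime ∧ 0 < n ∧ q = p ^ n) (he : 2 ≤ e)
    (K V : Type*) [Field K] [Fintype K] (hK : Fintype.card K = q)
    [AddCommGroup V] [Module K V] [FiniteDimensional K V]
    (hV : Module.finrank K V = 2 * e + 1)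
    (H : Submodule K V) (hH : Module.finrank K ↥H = 2 * e)
    (σ : Submodule K V → Submodule K V)
    (hσle : ∀ W ≤ H, σ W ≤ H)
    (hσinv : ∀ W ≤ H, σ (σ W) = W)
    (hσanti : ∀ W₁ W₂ : Submodule K V, W₁ ≤ H → W₂ ≤ H → W₁ ≤ W₂ → σ W₂ ≤ σ W₁)
    (hσinf : ∀ W₁ W₂ : Submodule K V, W₁ ≤ H → W₂ ≤ H → σ W₁ ⊓ σ W₂ = σ (W₁ ⊔ W₂))
    (hσrank : ∀ W ≤ H, Module.finrank K ↥(σ W) = 2 * e - Module.finrank K ↥W)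
    :
    {P : Submodule K V | Module.finrank K P = 1}.ncard = (q ^ (2 * e + 1) - 1) / (q - 1) ∧
    (∀ B ∈ blocksJT e σ H, B.ncard = (q ^ (e + 1) - 1) / (q - 1)) ∧
    (∀ P₁ P₂ : Submodule K V, Module.finrank K P₁ = 1 → Module.finrank K P₂ = 1 → P₁ ≠ P₂ →
      {B ∈ blocksJT e σ H | P₁ ∈ B ∧ P₂ ∈ B}.ncard =
        (∏ i ∈ Finset.Icc (e + 1) (2 * e - 1), (q ^ i - 1)) /
          ∏ i ∈ Finset.Icc 1 (e - 1), (q ^ i - 1)) := by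
  classical
  subst hK
  haveI : Finite V := Module.finite_of_finite K
  haveI : Finite (Submodule K V) :=
    Finite.of_injective (fun W : Submodule K V => (W : Set V)) SetLike.coe_injective
  have hq2 : 2 ≤ Fintype.card K := Fintype.one_lt_card
  have hgalois : ∀ A B : Submodule K V, A ≤ H → B ≤ H → (A ≤ σ B ↔ B ≤ σ A) := by
    intro A B hA hB
    constructor <;> intro h
    · have h2 := hσanti A (σ B) hA (hσle B hB) h
      rwa [hσinv B hB] at h2
    · have h2 := hσanti B (σ A) hB (hσle A hA) h
      rwa [hσinv A hA] at h2
  have hWH_inf : ∀ W : Submodule K V, finrank K ↥W = e + 1 → ¬ W ≤ H →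
      finrank K ↥(W ⊓ H) = e := by
    intro W hWr hWle
    have hsup : W ⊔ H = ⊤ := by
      have hlt : H < W ⊔ H :=
        lt_of_le_of_ne le_sup_right (fun hc => hWle (le_trans le_sup_left (le_of_eq hc.symm)))
      have h1 : 2 * e < finrank K ↥(W ⊔ H) := hH ▸ Submodule.finrank_lt_finrank_of_lt hlt
      have h2 : finrank K ↥(W ⊔ H) ≤ 2 * e + 1 := hV ▸ Submodule.finrank_le _
      apply Submodule.eq_top_of_finrank_eq
      rw [hV]
      omega
    have h3 := Submodule.finrank_sup_add_finrank_inf_eq W H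
    rw [hsup, finrank_top, hV, hWr, hH] at h3
    omega
  have hline_inf_bot : ∀ P M : Submodule K V, finrank K ↥P = 1 → ¬ P ≤ H → M ≤ H →
      M ⊓ P = ⊥ := by
    intro P M hP hPH hMH
    by_contra hne
    have hle : M ⊓ P ≤ P := inf_le_right
    have hfr1 : finrank K ↥(M ⊓ P) ≤ 1 := hP ▸ Submodule.finrank_mono hle
    have hfr2 : finrank K ↥(M ⊓ P) ≠ 0 := fun hc => hne (Submodule.finrank_eq_zero.1 hc)
    have heq : M ⊓ P = P := Submodule.eq_of_le_of_finrank_eq hle (by omega)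
    exact hPH (le_trans (le_of_eq heq.symm) (le_trans inf_le_left hMH))
  have hsup_rank : ∀ M P : Submodule K V, finrank K ↥P = 1 → ¬ P ≤ H → M ≤ H →
      finrank K ↥(M ⊔ P) = finrank K ↥M + 1 := by
    intro M P hP hPH hMH
    have h3 := Submodule.finrank_sup_add_finrank_inf_eq M P
    rw [hline_inf_bot P M hP hPH hMH, finrank_bot, hP] at h3
    omega
  have hline2 : ∀ P₁ P₂ : Submodule K V, finrank K ↥P₁ = 1 → finrank K ↥P₂ = 1 → P₁ ≠ P₂ →
      finrank K ↥(P₁ ⊔ P₂) = 2 := by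
    intro P₁ P₂ h1 h2 hne12
    have hinf : P₁ ⊓ P₂ = ⊥ := by
      by_contra hc
      have hle : P₁ ⊓ P₂ ≤ P₁ := inf_le_left
      have hfr1 : finrank K ↥(P₁ ⊓ P₂) ≤ 1 := h1 ▸ Submodule.finrank_mono hle
      have hfr2 : finrank K ↥(P₁ ⊓ P₂) ≠ 0 := fun hk => hc (Submodule.finrank_eq_zero.1 hk)
      have heq1 : P₁ ⊓ P₂ = P₁ := Submodule.eq_of_le_of_finrank_eq hle (by omega)
      have heq2 : P₁ ⊓ P₂ = P₂ := Submodule.eq_of_le_of_finrank_eq inf_le_right (by omega)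
      exact hne12 (heq1.symm.trans heq2)
    have h3 := Submodule.finrank_sup_add_finrank_inf_eq P₁ P₂
    rw [hinf, finrank_bot, h1, h2] at h3
    omega
  have hpt : ∀ S : Submodule K V, 1 ≤ finrank K ↥S →
      {P : Submodule K V | finrank K ↥P = 1 ∧ P ≤ S}.ncard * (Fintype.card K - 1)
        = Fintype.card K ^ finrank K ↥S - 1 := by
    intro S hS
    have h := count_interval (K := K) (M := V) ⊥ S bot_le 1 (by rw [finrank_bot]; omega) hS
    rw [finrank_bot, Nat.sub_zero, Nat.sub_zero] at h
    rw [show finrank K ↥S - 1 + 1 = finrank K ↥S by omega] at h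
    rw [Finset.Icc_self, Finset.prod_singleton, Finset.Icc_self, Finset.prod_singleton,
      pow_one] at h
    have hsets : {P : Submodule K V | finrank K ↥P = 1 ∧ P ≤ S}
        = {W : Submodule K V | finrank K ↥W = 1 ∧ ⊥ ≤ W ∧ W ≤ S} := by
      ext P
      simp [bot_le]
    rw [hsets]
    exact h
  refine ⟨?_, ?_, ?_⟩
  · have h := hpt ⊤ (by rw [finrank_top, hV]; omega)
    rw [finrank_top, hV] at h
    have hset : {P : Submodule K V | finrank K ↥P = 1}
        = {P : Submodule K V | finrank K ↥P = 1 ∧ P ≤ ⊤} := by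
      ext P
      simp
    rw [hset]
    exact nat_div_helper (by omega) h
  · rintro B hB
    rcases hB with ⟨W, hW, rfl⟩ | ⟨U, hUr, hUle, rfl⟩
    · obtain ⟨hWr, hWle⟩ := hW
      have hinf := hWH_inf W hWr hWle
      have hσr : finrank K ↥(σ (W ⊓ H)) = e := by
        rw [hσrank _ inf_le_right, hinf]
        omega
      have hsplit : blockA σ H W
          = {P : Submodule K V | finrank K ↥P = 1 ∧ P ≤ σ (W ⊓ H)}
            ∪ ({P : Submodule K V | finrank K ↥P = 1 ∧ P ≤ W}
               \ {P : Submodule K V | finrank K ↥P = 1 ∧ P ≤ W ⊓ H}) := by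
        ext P
        rw [mem_blockA_iff]
        simp only [Set.mem_union, Set.mem_diff, Set.mem_setOf_eq]
        constructor
        · rintro ⟨hP, h | ⟨h1, h2⟩⟩
          · exact Or.inl ⟨hP, h⟩
          · exact Or.inr ⟨⟨hP, h1⟩, fun hc => h2 (le_trans hc.2 inf_le_right)⟩
        · rintro (⟨hP, h⟩ | ⟨⟨hP, h1⟩, h2⟩)
          · exact ⟨hP, Or.inl h⟩
          · exact ⟨hP, Or.inr ⟨h1, fun hc => h2 ⟨hP, le_inf h1 hc⟩⟩⟩
      have c1 := hpt (σ (W ⊓ H)) (by rw [hσr]; omega)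
      rw [hσr] at c1
      have c2 := hpt W (by rw [hWr]; omega)
      rw [hWr] at c2
      have c3 := hpt (W ⊓ H) (by rw [hinf]; omega)
      rw [hinf] at c3
      have hsub : {P : Submodule K V | finrank K ↥P = 1 ∧ P ≤ W ⊓ H}
          ⊆ {P : Submodule K V | finrank K ↥P = 1 ∧ P ≤ W} :=
        fun P hP => ⟨hP.1, le_trans hP.2 inf_le_left⟩
      have hdisj : Disjoint {P : Submodule K V | finrank K ↥P = 1 ∧ P ≤ σ (W ⊓ H)}
          ({P : Submodule K V | finrank K ↥P = 1 ∧ P ≤ W}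
            \ {P : Submodule K V | finrank K ↥P = 1 ∧ P ≤ W ⊓ H}) := by
        rw [Set.disjoint_left]
        rintro P ⟨hP, hPσ⟩ ⟨⟨-, hPW⟩, hPn⟩
        exact hPn ⟨hP, le_inf hPW (le_trans hPσ (hσle _ inf_le_right))⟩
      rw [hsplit, Set.ncard_union_eq hdisj (Set.toFinite _) (Set.toFinite _),
        Set.ncard_diff hsub (Set.toFinite _)]
      apply nat_div_helper (show 0 < Fintype.card K - 1 by omega)
      rw [Nat.add_mul, Nat.sub_mul, c1, c2, c3]
      have p1 : Fintype.card K ^ e ≤ Fintype.card K ^ (e + 1) :=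
        Nat.pow_le_pow_right (by omega) (by omega)
      have p2 : 1 ≤ Fintype.card K ^ e := Nat.one_le_pow _ _ (by omega)
      omega
    · have hs : projPts K (U : Set V) = {P : Submodule K V | finrank K ↥P = 1 ∧ P ≤ U} := by
        ext P
        exact mem_projPts_iff
      have h := hpt U (by rw [hUr]; omega)
      rw [hUr] at h
      rw [hs]
      exact nat_div_helper (show 0 < Fintype.card K - 1 by omega) h
  · intro P₁ P₂ hP₁ hP₂ hne
    have hDpos : 0 < ∏ i ∈ Finset.Icc 1 (e - 1), (Fintype.card K ^ i - 1) :=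
      prod_Icc_pos hq2 le_rfl
    set Ac := {W : Submodule K V | W ∈ setA e H ∧ P₁ ∈ blockA σ H W ∧ P₂ ∈ blockA σ H W}
      with hAc
    set Bc := {U : Submodule K V | (finrank K ↥U = e + 1 ∧ U ≤ H) ∧ P₁ ≤ U ∧ P₂ ≤ U} with hBc
    have hsplitB : {B ∈ blocksJT e σ H | P₁ ∈ B ∧ P₂ ∈ B}
        = (blockA σ H '' Ac) ∪ ((fun U : Submodule K V => projPts K (U : Set V)) '' Bc) := by
      ext B
      simp only [Set.mem_sep_iff, blocksJT, Set.mem_union, Set.mem_image, Set.mem_setOf_eq]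
      constructor
      · rintro ⟨hB | ⟨U, hU1, hU2, rfl⟩, h1, h2⟩
        · obtain ⟨W, hW, rfl⟩ := hB
          exact Or.inl ⟨W, ⟨hW, h1, h2⟩, rfl⟩
        · exact Or.inr ⟨U, ⟨⟨hU1, hU2⟩, (mem_projPts_iff.1 h1).2, (mem_projPts_iff.1 h2).2⟩, rfl⟩
      · rintro (⟨W, ⟨hW, h1, h2⟩, rfl⟩ | ⟨U, ⟨⟨hU1, hU2⟩, hl1, hl2⟩, rfl⟩)
        · exact ⟨Or.inl ⟨W, hW, rfl⟩, h1, h2⟩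
        · exact ⟨Or.inr ⟨U, hU1, hU2, rfl⟩, mem_projPts_iff.2 ⟨hP₁, hl1⟩,
            mem_projPts_iff.2 ⟨hP₂, hl2⟩⟩
    have hdisjAB : Disjoint (blockA σ H '' Ac)
        ((fun U : Submodule K V => projPts K (U : Set V)) '' Bc) := by
      rw [Set.disjoint_left]
      rintro B ⟨W, hW, rfl⟩ ⟨U, hU, hBU⟩
      exact blockA_ne_projPts hW.1.2 hU.1.2 hBU.symm
    have hinjA : Set.InjOn (blockA σ H) Ac := (blockA_injOn hσle).mono (fun W hW => hW.1)
    have hinjB : Set.InjOn (fun U : Submodule K V => projPts K (U : Set V)) Bc :=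
      fun U₁ _ U₂ _ h => projPts_injective h
    have hcount : {B ∈ blocksJT e σ H | P₁ ∈ B ∧ P₂ ∈ B}.ncard = Ac.ncard + Bc.ncard := by
      rw [hsplitB, Set.ncard_union_eq hdisjAB (Set.toFinite _) (Set.toFinite _),
        Set.ncard_image_of_injOn hinjA, Set.ncard_image_of_injOn hinjB]
    have hmixed : ∀ Pa Pb : Submodule K V, finrank K ↥Pa = 1 → finrank K ↥Pb = 1 →
        Pa ≤ H → ¬ Pb ≤ H →
        {W : Submodule K V | W ∈ setA e H ∧ Pa ∈ blockA σ H W ∧ Pb ∈ blockA σ H W}.ncard *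
            ∏ i ∈ Finset.Icc 1 (e - 1), (Fintype.card K ^ i - 1)
          = ∏ i ∈ Finset.Icc (e + 1) (2 * e - 1), (Fintype.card K ^ i - 1) := by
      intro Pa Pb hPa hPb haH hbH
      have hσa_le : σ Pa ≤ H := hσle Pa haH
      have hσa_rank : finrank K ↥(σ Pa) = 2 * e - 1 := by rw [hσrank Pa haH, hPa]
      have hSmem : ∀ W : Submodule K V,
          (W ∈ setA e H ∧ Pa ∈ blockA σ H W ∧ Pb ∈ blockA σ H W)
            ↔ (finrank K ↥W = e + 1 ∧ ¬ W ≤ H ∧ W ⊓ H ≤ σ Pa ∧ Pb ≤ W) := by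
        intro W
        constructor
        · rintro ⟨⟨hWr, hWH⟩, ha, hb⟩
          rw [mem_blockA_iff] at ha hb
          have hPbW : Pb ≤ W := by
            rcases hb.2 with h | h
            · exact absurd (le_trans h (hσle _ inf_le_right)) hbH
            · exact h.1
          have haσ : Pa ≤ σ (W ⊓ H) := by
            rcases ha.2 with h | h
            · exact h
            · exact absurd haH h.2
          exact ⟨hWr, hWH, (hgalois Pa (W ⊓ H) haH inf_le_right).1 haσ, hPbW⟩
        · rintro ⟨hWr, hWH, hWσ, hbW⟩
          refine ⟨⟨hWr, hWH⟩, ?_, ?_⟩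
          · rw [mem_blockA_iff]
            exact ⟨hPa, Or.inl ((hgalois Pa (W ⊓ H) haH inf_le_right).2 hWσ)⟩
          · rw [mem_blockA_iff]
            exact ⟨hPb, Or.inr ⟨hbW, hbH⟩⟩
      have hrec : ∀ W ∈ {W : Submodule K V | W ∈ setA e H ∧ Pa ∈ blockA σ H W ∧
          Pb ∈ blockA σ H W}, W = (W ⊓ H) ⊔ Pb := by
        intro W hW
        rw [Set.mem_setOf_eq, hSmem W] at hW
        obtain ⟨hWr, hWH, -, hbW⟩ := hW
        have hinf := hWH_inf W hWr hWH
        have hs := hsup_rank (W ⊓ H) Pb hPb hbH inf_le_right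
        rw [hinf] at hs
        exact (Submodule.eq_of_le_of_finrank_eq (sup_le inf_le_left hbW)
          (by rw [hs, hWr])).symm
      have hinj : Set.InjOn (fun W : Submodule K V => W ⊓ H)
          {W : Submodule K V | W ∈ setA e H ∧ Pa ∈ blockA σ H W ∧ Pb ∈ blockA σ H W} := by
        intro W₁ h₁ W₂ h₂ heq
        simp only at heq
        rw [hrec W₁ h₁, hrec W₂ h₂, heq]
      have himg : (fun W : Submodule K V => W ⊓ H) ''
          {W : Submodule K V | W ∈ setA e H ∧ Pa ∈ blockA σ H W ∧ Pb ∈ blockA σ H W}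
          = {W : Submodule K V | finrank K ↥W = e ∧ ⊥ ≤ W ∧ W ≤ σ Pa} := by
        ext M
        constructor
        · rintro ⟨W, hW, rfl⟩
          rw [Set.mem_setOf_eq, hSmem W] at hW
          obtain ⟨hWr, hWH, hWσ, -⟩ := hW
          exact ⟨hWH_inf W hWr hWH, bot_le, hWσ⟩
        · rintro ⟨hMr, -, hMσ⟩
          have hMH : M ≤ H := le_trans hMσ hσa_le
          have hWr : finrank K ↥(M ⊔ Pb) = e + 1 := by
            rw [hsup_rank M Pb hPb hbH hMH, hMr]
          have hWH : ¬ (M ⊔ Pb) ≤ H := fun hc => hbH (le_trans le_sup_right hc)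
          have hMeq : (M ⊔ Pb) ⊓ H = M := by
            have h1 : M ≤ (M ⊔ Pb) ⊓ H := le_inf le_sup_left hMH
            exact (Submodule.eq_of_le_of_finrank_eq h1
              (by rw [hMr, hWH_inf _ hWr hWH])).symm
          refine ⟨M ⊔ Pb, ?_, hMeq⟩
          rw [Set.mem_setOf_eq, hSmem _]
          refine ⟨hWr, hWH, ?_, le_sup_right⟩
          rw [hMeq]
          exact hMσ
      have hc := count_interval (K := K) (M := V) ⊥ (σ Pa) bot_le e
        (by rw [finrank_bot]; omega) (by rw [hσa_rank]; omega)
      rw [finrank_bot, hσa_rank, Nat.sub_zero, Nat.sub_zero] at hc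
      rw [show 2 * e - 1 - e + 1 = e by omega] at hc
      rw [← Set.ncard_image_of_injOn hinj, himg]
      exact mixed_arith hq2 he hc
    rw [hcount]
    by_cases h1H : P₁ ≤ H <;> by_cases h2H : P₂ ≤ H
    · -- both points in H
      have hLH : P₁ ⊔ P₂ ≤ H := sup_le h1H h2H
      have hL2 : finrank K ↥(P₁ ⊔ P₂) = 2 := hline2 P₁ P₂ hP₁ hP₂ hne
      have hσL_le : σ (P₁ ⊔ P₂) ≤ H := hσle _ hLH
      have hσL_rank : finrank K ↥(σ (P₁ ⊔ P₂)) = 2 * e - 2 := by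
        rw [hσrank _ hLH, hL2]
      have hBceq : Bc = {W : Submodule K V | finrank K ↥W = e + 1 ∧ P₁ ⊔ P₂ ≤ W ∧ W ≤ H} := by
        ext U
        simp only [hBc, Set.mem_setOf_eq, sup_le_iff]
        tauto
      have hAmem : ∀ W : Submodule K V, W ∈ Ac ↔
          (finrank K ↥W = e + 1 ∧ ¬ W ≤ H ∧ W ⊓ H ≤ σ (P₁ ⊔ P₂)) := by
        intro W
        rw [hAc]
        simp only [Set.mem_setOf_eq, setA, mem_blockA_iff]
        constructor
        · rintro ⟨⟨hWr, hWH⟩, ⟨-, ha⟩, ⟨-, hb⟩⟩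
          have h1' : P₁ ≤ σ (W ⊓ H) := by
            rcases ha with h | h
            · exact h
            · exact absurd h1H h.2
          have h2' : P₂ ≤ σ (W ⊓ H) := by
            rcases hb with h | h
            · exact h
            · exact absurd h2H h.2
          exact ⟨hWr, hWH,
            (hgalois (P₁ ⊔ P₂) (W ⊓ H) hLH inf_le_right).1 (sup_le h1' h2')⟩
        · rintro ⟨hWr, hWH, hWσ⟩
          have hLσ : P₁ ⊔ P₂ ≤ σ (W ⊓ H) :=
            (hgalois (P₁ ⊔ P₂) (W ⊓ H) hLH inf_le_right).2 hWσ
          exact ⟨⟨hWr, hWH⟩, ⟨hP₁, Or.inl (le_trans le_sup_left hLσ)⟩,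
            ⟨hP₂, Or.inl (le_trans le_sup_right hLσ)⟩⟩
      have hAcount : Ac.ncard =
          {W : Submodule K V | finrank K ↥W = e ∧ ⊥ ≤ W ∧ W ≤ σ (P₁ ⊔ P₂)}.ncard
            * Fintype.card K ^ e := by
        apply ncard_eq_of_fibers (fun W => W ⊓ H)
        · rintro W hW
          rw [hAmem W] at hW
          exact ⟨hWH_inf W hW.1 hW.2.1, bot_le, hW.2.2⟩
        · rintro M ⟨hMr, -, hMσ⟩
          have hMH : M ≤ H := le_trans hMσ hσL_le
          have hfibeq : {W ∈ Ac | (fun W : Submodule K V => W ⊓ H) W = M}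
              = {W : Submodule K V | finrank K ↥W = e + 1 ∧ M ≤ W ∧ W ≤ ⊤}
                \ {W : Submodule K V | finrank K ↥W = e + 1 ∧ M ≤ W ∧ W ≤ H} := by
            ext W
            simp only [Set.mem_sep_iff, Set.mem_diff, Set.mem_setOf_eq, hAmem W]
            constructor
            · rintro ⟨⟨hWr, hWH, hWσ⟩, hWM⟩
              refine ⟨⟨hWr, ?_, le_top⟩, fun hcon => hWH hcon.2.2⟩
              rw [← hWM]
              exact inf_le_left
            · rintro ⟨⟨hWr, hMW, -⟩, hno⟩
              have hWH : ¬ W ≤ H := fun hcon => hno ⟨hWr, hMW, hcon⟩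
              have hMeq : W ⊓ H = M := (Submodule.eq_of_le_of_finrank_eq (le_inf hMW hMH)
                (by rw [hMr, hWH_inf W hWr hWH])).symm
              refine ⟨⟨hWr, hWH, ?_⟩, hMeq⟩
              rw [hMeq]
              exact hMσ
          have hss : {W : Submodule K V | finrank K ↥W = e + 1 ∧ M ≤ W ∧ W ≤ H}
              ⊆ {W : Submodule K V | finrank K ↥W = e + 1 ∧ M ≤ W ∧ W ≤ ⊤} :=
            fun W hW => ⟨hW.1, hW.2.1, le_top⟩
          rw [hfibeq, Set.ncard_diff hss (Set.toFinite _)]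
          have hbig := count_interval (K := K) (M := V) M ⊤ le_top (e + 1)
            (by rw [hMr]; omega) (by rw [finrank_top, hV]; omega)
          rw [finrank_top, hV, hMr] at hbig
          rw [show e + 1 - e = 1 by omega, show 2 * e + 1 - (e + 1) + 1 = e + 1 by omega,
            show 2 * e + 1 - e = e + 1 by omega, Finset.Icc_self, Finset.prod_singleton,
            Finset.Icc_self, Finset.prod_singleton, pow_one] at hbig
          have hsmall := count_interval (K := K) (M := V) M H hMH (e + 1)
            (by rw [hMr]; omega) (by rw [hH]; omega)
          rw [hH, hMr] at hsmall
          rw [show e + 1 - e = 1 by omega, show 2 * e - (e + 1) + 1 = e by omega,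
            show 2 * e - e = e by omega, Finset.Icc_self, Finset.prod_singleton,
            Finset.Icc_self, Finset.prod_singleton, pow_one] at hsmall
          apply Nat.eq_of_mul_eq_mul_right (show 0 < Fintype.card K - 1 by omega)
          rw [Nat.sub_mul, hbig, hsmall]
          have hpow : Fintype.card K ^ e * (Fintype.card K - 1)
              = Fintype.card K ^ (e + 1) - Fintype.card K ^ e := by
            rw [Nat.mul_sub, mul_one, ← pow_succ]
          have p1 : Fintype.card K ^ e ≤ Fintype.card K ^ (e + 1) :=
            Nat.pow_le_pow_right (by omega) (by omega)
          have p2 : 1 ≤ Fintype.card K ^ e := Nat.one_le_pow _ _ (by omega)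
          omega
      have hNa := count_interval (K := K) (M := V) (P₁ ⊔ P₂) H hLH (e + 1)
        (by rw [hL2]; omega) (by rw [hH]; omega)
      rw [hL2, hH] at hNa
      rw [show e + 1 - 2 = e - 1 by omega, show 2 * e - (e + 1) + 1 = e by omega] at hNa
      have hNb := count_interval (K := K) (M := V) ⊥ (σ (P₁ ⊔ P₂)) bot_le e
        (by rw [finrank_bot]; omega) (by rw [hσL_rank]; omega)
      rw [finrank_bot, hσL_rank, Nat.sub_zero, Nat.sub_zero] at hNb
      rw [show 2 * e - 2 - e + 1 = e - 1 by omega] at hNb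
      apply nat_div_helper hDpos
      rw [hAcount, hBceq]
      have harith := caseH_arith hq2 he hNa hNb
      rwa [Nat.add_comm] at harith
    · have hBce : Bc = ∅ := by
        ext U
        simp only [hBc, Set.mem_setOf_eq, Set.mem_empty_iff_false, iff_false]
        rintro ⟨⟨-, hUH⟩, -, h2⟩
        exact h2H (le_trans h2 hUH)
      rw [hBce, Set.ncard_empty, add_zero]
      exact nat_div_helper hDpos (hmixed P₁ P₂ hP₁ hP₂ h1H h2H)
    · have hBce : Bc = ∅ := by
        ext U
        simp only [hBc, Set.mem_setOf_eq, Set.mem_empty_iff_false, iff_false]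
        rintro ⟨⟨-, hUH⟩, h1, -⟩
        exact h1H (le_trans h1 hUH)
      have hAcsym : Ac = {W : Submodule K V | W ∈ setA e H ∧ P₂ ∈ blockA σ H W ∧
          P₁ ∈ blockA σ H W} := by
        ext W
        simp only [hAc, Set.mem_setOf_eq]
        tauto
      rw [hBce, Set.ncard_empty, add_zero, hAcsym]
      exact nat_div_helper hDpos (hmixed P₂ P₁ hP₂ hP₁ h2H h1H)
    · have hBce : Bc = ∅ := by
        ext U
        simp only [hBc, Set.mem_setOf_eq, Set.mem_empty_iff_false, iff_false]
        rintro ⟨⟨-, hUH⟩, h1, -⟩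
        exact h1H (le_trans h1 hUH)
      have hL2 : finrank K ↥(P₁ ⊔ P₂) = 2 := hline2 P₁ P₂ hP₁ hP₂ hne
      have hAceq : Ac = {W : Submodule K V | finrank K ↥W = e + 1 ∧ P₁ ⊔ P₂ ≤ W ∧ W ≤ ⊤} := by
        ext W
        rw [hAc]
        simp only [Set.mem_setOf_eq, setA, mem_blockA_iff, sup_le_iff]
        constructor
        · rintro ⟨⟨hWr, hWH⟩, ⟨-, ha⟩, ⟨-, hb⟩⟩
          have g1 : P₁ ≤ W := by
            rcases ha with h | h
            · exact absurd (le_trans h (hσle _ inf_le_right)) h1H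
            · exact h.1
          have g2 : P₂ ≤ W := by
            rcases hb with h | h
            · exact absurd (le_trans h (hσle _ inf_le_right)) h2H
            · exact h.1
          exact ⟨hWr, ⟨g1, g2⟩, le_top⟩
        · rintro ⟨hWr, ⟨g1, g2⟩, -⟩
          have hWH : ¬ W ≤ H := fun hc => h1H (le_trans g1 hc)
          exact ⟨⟨hWr, hWH⟩, ⟨hP₁, Or.inr ⟨g1, h1H⟩⟩, ⟨hP₂, Or.inr ⟨g2, h2H⟩⟩⟩
      have hc := count_interval (K := K) (M := V) (P₁ ⊔ P₂) ⊤ le_top (e + 1)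
        (by rw [hL2]; omega) (by rw [finrank_top, hV]; omega)
      rw [finrank_top, hV, hL2] at hc
      rw [show e + 1 - 2 = e - 1 by omega, show 2 * e + 1 - (e + 1) + 1 = e + 1 by omega,
        show 2 * e + 1 - 2 = 2 * e - 1 by omega] at hc
      rw [hBce, Set.ncard_empty, add_zero, hAceq]
      exact nat_div_helper hDpos hc
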